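/- Let (e₁,…,e_n) be an orthonormal basis of X, Ω = e₁∧⋯∧e_n, ⋆_R M = M⌟Ω, ⋆_L M = Ω⌞M, and define the regressive product M∨N := ⋆_L(⋆_R M ∧ ⋆_R N). For nonzero blades A, B ∈ ⋀X: A∨B ≠ 0 if and only if [A] + [B] = X; and if A∨B ≠ 0, then A∨B is a blade with {v ∈ X : v∧(A∨B) = 0} = [A] ∩ [B]. -/

import Mathlib

open scoped RealInnerProductSpace

/-- The blade `v₁ ∧ ⋯ ∧ v_k` in the exterior algebra. -/
noncomputable def expBlade {X : Type*} [AddCommGroup X] [Module ℝ X] {k : ℕ}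
    (v : Fin k → X) : ExteriorAlgebra ℝ X :=
  (List.ofFn fun i => ExteriorAlgebra.ι ℝ (v i)).prod

/-- A blade: a scalar, or an exterior product of vectors. -/
def IsBlade {X : Type*} [AddCommGroup X] [Module ℝ X] (B : ExteriorAlgebra ℝ X) : Prop :=
  (∃ r : ℝ, B = algebraMap ℝ (ExteriorAlgebra ℝ X) r) ∨
    ∃ (k : ℕ) (v : Fin k → X), B = (List.ofFn fun i => ExteriorAlgebra.ι ℝ (v i)).prod

noncomputable section
namespace Stmt10Aux
variable {X : Type*} [NormedAddCommGroup X] [InnerProductSpace ℝ X]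
local notation "ιX" => ExteriorAlgebra.ι ℝ (M := X)
def eProd (l : List X) : ExteriorAlgebra ℝ X := (l.map (ExteriorAlgebra.ι ℝ)).prod
@[simp] lemma eProd_nil : eProd ([] : List X) = 1 := rfl
@[simp] lemma eProd_cons (a : X) (l : List X) : eProd (a :: l) = ιX a * eProd l := by simp [eProd]
lemma eProd_append (l₁ l₂ : List X) : eProd (l₁ ++ l₂) = eProd l₁ * eProd l₂ := by simp [eProd]
def ONL (l : List X) : Prop := l.Pairwise (fun a b => ⟪a, b⟫ = 0) ∧ ∀ a ∈ l, ⟪a, a⟫ = 1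
lemma ONL.tail {a : X} {l : List X} (h : ONL (a :: l)) : ONL l :=
  ⟨h.1.of_cons, fun x hx => h.2 x (List.mem_cons_of_mem _ hx)⟩
lemma ONL.head_orth {a : X} {l : List X} (h : ONL (a :: l)) : ∀ x ∈ l, ⟪a, x⟫ = 0 :=
  (List.pairwise_cons.mp h.1).1

/-- bundles all the contraction data and hypotheses of the theorem -/
structure Ctx (X : Type*) [NormedAddCommGroup X] [InnerProductSpace ℝ X] where
  ginv : ExteriorAlgebra ℝ X →ₐ[ℝ] ExteriorAlgebra ℝ X
  hginv : ∀ v : X, ginv (ExteriorAlgebra.ι ℝ v) = - ExteriorAlgebra.ι ℝ v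
  lc : X → ExteriorAlgebra ℝ X →ₗ[ℝ] ExteriorAlgebra ℝ X
  hlc_one : ∀ v : X, lc v 1 = 0
  hlc_vec : ∀ v w : X, lc v (ExteriorAlgebra.ι ℝ w) = algebraMap ℝ (ExteriorAlgebra ℝ X) ⟪v, w⟫
  hlc_mul : ∀ (v : X) (M N : ExteriorAlgebra ℝ X),
    lc v (M * N) = lc v M * N + ginv M * lc v N
  rc : X → ExteriorAlgebra ℝ X →ₗ[ℝ] ExteriorAlgebra ℝ X
  hrc_one : ∀ v : X, rc v 1 = 0
  hrc_vec : ∀ v w : X, rc v (ExteriorAlgebra.ι ℝ w) = algebraMap ℝ (ExteriorAlgebra ℝ X) ⟪v, w⟫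
  hrc_mul : ∀ (v : X) (M N : ExteriorAlgebra ℝ X),
    rc v (M * N) = M * rc v N + rc v M * ginv N
  LC : ExteriorAlgebra ℝ X →ₗ[ℝ] ExteriorAlgebra ℝ X →ₗ[ℝ] ExteriorAlgebra ℝ X
  hLC_one : ∀ N : ExteriorAlgebra ℝ X, LC 1 N = N
  hLC_vec : ∀ (v : X) (N : ExteriorAlgebra ℝ X), LC (ExteriorAlgebra.ι ℝ v) N = lc v N
  hLC_mul : ∀ (v : X) (M N : ExteriorAlgebra ℝ X),
    LC (ExteriorAlgebra.ι ℝ v * M) N = LC M (lc v N)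
  RC : ExteriorAlgebra ℝ X →ₗ[ℝ] ExteriorAlgebra ℝ X →ₗ[ℝ] ExteriorAlgebra ℝ X
  hRC_one : ∀ N : ExteriorAlgebra ℝ X, RC N 1 = N
  hRC_vec : ∀ (v : X) (N : ExteriorAlgebra ℝ X), RC N (ExteriorAlgebra.ι ℝ v) = rc v N
  hRC_mul : ∀ (v : X) (M N : ExteriorAlgebra ℝ X),
    RC N (ExteriorAlgebra.ι ℝ v * M) = rc v (RC N M)

variable (C : Ctx X)

lemma lc_step (v u : X) (M : ExteriorAlgebra ℝ X) :
    C.lc v (ιX u * M) = ⟪v, u⟫ • M - ιX u * C.lc v M := by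
  rw [C.hlc_mul, C.hlc_vec, C.hginv, Algebra.smul_def]; rw [neg_mul, ← sub_eq_add_neg]

lemma rc_step (v u : X) (M : ExteriorAlgebra ℝ X) :
    C.rc v (M * ιX u) = ⟪v, u⟫ • M - C.rc v M * ιX u := by
  rw [C.hrc_mul, C.hrc_vec, C.hginv, ← Algebra.commutes ⟪v, u⟫ M, Algebra.smul_def]; rw [mul_neg, ← sub_eq_add_neg]

lemma lc_orth (v : X) (l : List X) (h : ∀ u ∈ l, ⟪v, u⟫ = 0) : C.lc v (eProd l) = 0 := by
  induction l with
  | nil => simpa using C.hlc_one v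
  | cons a t ih =>
      rw [eProd_cons, lc_step, h a (List.mem_cons_self),
        ih fun u hu => h u (List.mem_cons_of_mem _ hu)]
      simp

lemma rc_orth (v : X) (l : List X) (h : ∀ u ∈ l, ⟪v, u⟫ = 0) : C.rc v (eProd l) = 0 := by
  induction l with
  | nil => simpa using C.hrc_one v
  | cons a t ih =>
      rw [eProd_cons, C.hrc_mul, ih fun u hu => h u (List.mem_cons_of_mem _ hu),
        C.hrc_vec, h a (List.mem_cons_self)]
      simp

lemma lc_cons_self (u : X) (l : List X) (h : ONL (u :: l)) :
    C.lc u (eProd (u :: l)) = eProd l := by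
  rw [eProd_cons, lc_step, lc_orth C u l h.head_orth, h.2 u (List.mem_cons_self)]
  simp

lemma rc_snoc_self (u : X) (l : List X) (h : ONL (l ++ [u])) :
    C.rc u (eProd (l ++ [u])) = eProd l := by
  have horth : ∀ x ∈ l, ⟪u, x⟫ = 0 := by
    intro x hx
    rw [real_inner_comm]
    exact List.pairwise_append.mp h.1 |>.2.2 x hx u (List.mem_singleton_self u)
  rw [eProd_append, show eProd [u] = ιX u * 1 from by simp, mul_one,
    rc_step, rc_orth C u l horth, h.2 u (by simp)]
  simp

lemma LC_eProd (a : List X) (N : ExteriorAlgebra ℝ X) :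
    C.LC (eProd a) N = a.foldl (fun N v => C.lc v N) N := by
  induction a generalizing N with
  | nil => simpa using C.hLC_one N
  | cons v t ih => rw [eProd_cons, C.hLC_mul, ih]; rfl

lemma RC_eProd (a : List X) (N : ExteriorAlgebra ℝ X) :
    C.RC N (eProd a) = a.foldr (fun v N => C.rc v N) N := by
  induction a with
  | nil => simpa using C.hRC_one N
  | cons v t ih => rw [eProd_cons, C.hRC_mul, ih]; rfl

lemma LC_hodge (a b : List X) (h : ONL (a ++ b)) :
    C.LC (eProd a) (eProd (a ++ b)) = eProd b := by
  induction a with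
  | nil => simpa using C.hLC_one _
  | cons v t ih =>
      rw [eProd_cons, C.hLC_mul, show (v :: t) ++ b = v :: (t ++ b) from rfl,
        lc_cons_self C v (t ++ b) h, ih h.tail]

lemma RC_hodge (a b : List X) (h : ONL (b ++ a)) :
    C.RC (eProd (b ++ a)) (eProd a) = eProd b := by
  induction a using List.reverseRecOn generalizing b with
  | nil => simpa using C.hRC_one _
  | append_singleton t v ih =>
      rw [RC_eProd, List.foldr_append, List.foldr_cons, List.foldr_nil,
        show b ++ (t ++ [v]) = (b ++ t) ++ [v] from (List.append_assoc b t [v]).symm,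
        rc_snoc_self C v (b ++ t) (by rwa [List.append_assoc b t [v]]),
        ← RC_eProd]
      exact ih b (by
        have : ONL ((b ++ t) ++ [v]) := by rwa [List.append_assoc]
        exact ⟨(this.1.sublist (List.sublist_append_left _ _)),
          fun x hx => this.2 x (List.mem_append_left _ hx)⟩)

-- module-valued determinant expansion of an alternating map
lemma alt_det {R M N : Type*} [CommRing R] [AddCommGroup M] [Module R M]
    [AddCommGroup N] [Module R N] {k : ℕ}
    (f : M [⋀^Fin k]→ₗ[R] N) (g : Module.Basis (Fin k) R M) (u : Fin k → M) :
    f u = g.det u • f g := by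
  have : f = (LinearMap.toSpanSingleton R N (f g)).compAlternatingMap g.det := by
    refine Module.Basis.ext_alternating g fun v hv => ?_
    classical
    let σ : Equiv.Perm (Fin k) := Equiv.ofBijective v (Finite.injective_iff_bijective.1 hv)
    have h1 : (fun i => g (v i)) = g ∘ σ := rfl
    rw [h1, AlternatingMap.map_perm, LinearMap.compAlternatingMap_apply,
      AlternatingMap.map_perm, Module.Basis.det_self]
    simp [LinearMap.toSpanSingleton_apply]
  rw [this]
  simp [LinearMap.toSpanSingleton_apply, Module.Basis.det_self]

lemma expBlade_eq {k : ℕ} (u : Fin k → X) :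
    (List.ofFn fun i => ExteriorAlgebra.ι ℝ (u i)).prod = eProd (List.ofFn u) := by
  rw [eProd, List.map_ofFn]; rfl

lemma expBlade_alt {k : ℕ} (u : Fin k → X) :
    eProd (List.ofFn u) = ExteriorAlgebra.ιMulti ℝ k u := by
  rw [ExteriorAlgebra.ιMulti_apply, eProd, List.map_ofFn]
  rfl

lemma blade_dep {k : ℕ} (u : Fin k → X) (h : ¬ LinearIndependent ℝ u) :
    eProd (List.ofFn u) = 0 := by
  rw [expBlade_alt]
  exact AlternatingMap.map_linearDependent _ u h

include C in
lemma ONL_ne_zero (l : List X) (h : ONL l) : eProd l ≠ 0 := by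
  intro h0
  have h1 : C.LC (eProd l) (eProd l) = 1 := by
    have := LC_hodge C l [] (by simpa using h)
    simpa using this
  rw [h0] at h1
  simp at h1


lemma ONL_ofFn {m : ℕ} (f : Fin m → X) (h : Orthonormal ℝ f) : ONL (List.ofFn f) := by
  constructor
  · rw [List.pairwise_ofFn]
    intro i j hij
    exact h.2 (Fin.ne_of_lt hij)
  · intro a ha
    obtain ⟨i, rfl⟩ := List.mem_ofFn.mp ha
    rw [real_inner_self_eq_norm_sq, h.1 i]
    norm_num

lemma blade_scale {k : ℕ} {U : Submodule ℝ X} (g : Module.Basis (Fin k) ℝ U)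
    (u : Fin k → X) (hu : ∀ i, u i ∈ U) :
    eProd (List.ofFn u)
      = g.det (fun i => (⟨u i, hu i⟩ : U)) • eProd (List.ofFn fun i => ((g i : U) : X)) := by
  have hF := alt_det ((ExteriorAlgebra.ιMulti ℝ k).compLinearMap U.subtype) g
    (fun i => (⟨u i, hu i⟩ : U))
  simp only [AlternatingMap.compLinearMap_apply] at hF
  rw [expBlade_alt, expBlade_alt]
  exact hF

variable [FiniteDimensional ℝ X]

open Submodule Module in
lemma blade_onb {k : ℕ} (u : Fin k → X) (h : LinearIndependent ℝ u) :
    ∃ (f : Fin k → X) (c : ℝ), c ≠ 0 ∧ Orthonormal ℝ f ∧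
      Submodule.span ℝ (Set.range f) = Submodule.span ℝ (Set.range u) ∧
      eProd (List.ofFn u) = c • eProd (List.ofFn f) := by
  set U := Submodule.span ℝ (Set.range u) with hU
  have hk : Module.finrank ℝ U = k := by
    rw [hU, finrank_span_eq_card h, Fintype.card_fin]
  let onb := (stdOrthonormalBasis ℝ U).reindex (finCongr hk)
  have hu : ∀ i, u i ∈ U := fun i => Submodule.subset_span (Set.mem_range_self i)
  let u' : Fin k → U := fun i => (⟨u i, hu i⟩ : U)
  have hcomp : U.subtype ∘ u' = u := rfl
  have hu'li : LinearIndependent ℝ u' := by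
    apply LinearIndependent.of_comp U.subtype
    rw [hcomp]; exact h
  have hmap : Submodule.map U.subtype (Submodule.span ℝ (Set.range u')) =
      Submodule.map U.subtype ⊤ := by
    rw [Submodule.map_span, ← Set.range_comp, hcomp, Submodule.map_top,
      Submodule.range_subtype]
  have hsp : ⊤ ≤ Submodule.span ℝ (Set.range u') :=
    le_of_eq (Submodule.map_injective_of_injective U.injective_subtype hmap).symm
  let bu : Basis (Fin k) ℝ U := Basis.mk hu'li hsp
  have hdet : IsUnit (onb.toBasis.det u') := by
    have := onb.toBasis.isUnit_det bu
    rwa [show ⇑bu = u' from Basis.coe_mk _ _] at this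
  refine ⟨fun i => ((onb i : U) : X), onb.toBasis.det u', hdet.ne_zero, ?_, ?_, ?_⟩
  · exact onb.orthonormal.comp_linearIsometry U.subtypeₗᵢ
  · have hr : Set.range (fun i => ((onb i : U) : X)) = U.subtype '' Set.range onb := by
      rw [← Set.range_comp]; rfl
    rw [hr, Submodule.span_image, ← OrthonormalBasis.coe_toBasis onb,
      onb.toBasis.span_eq, Submodule.map_top, Submodule.range_subtype]
  · have := blade_scale (X := X) onb.toBasis u hu
    simpa using this

include C in
lemma blade_ne_iff {k : ℕ} (u : Fin k → X) :
    eProd (List.ofFn u) ≠ 0 ↔ LinearIndependent ℝ u := by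
  constructor
  · intro h; by_contra hd; exact h (blade_dep u hd)
  · intro h
    obtain ⟨f, c, hc, hf, _, heq⟩ := blade_onb u h
    rw [heq]
    exact smul_ne_zero hc (ONL_ne_zero C _ (ONL_ofFn f hf))

lemma ofFn_cast {α : Type*} {m m' : ℕ} (h : m' = m) (f : Fin m → α) :
    List.ofFn (fun i : Fin m' => f (Fin.cast h i)) = List.ofFn f := by subst h; rfl

open Submodule Module in
lemma sub_onb (W : Submodule ℝ X) :
    ∃ g : Fin (Module.finrank ℝ W) → X, Orthonormal ℝ g ∧
      Submodule.span ℝ (Set.range g) = W := by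
  let onb := stdOrthonormalBasis ℝ W
  refine ⟨fun i => ((onb i : W) : X), onb.orthonormal.comp_linearIsometry W.subtypeₗᵢ, ?_⟩
  have hr : Set.range (fun i => ((onb i : W) : X)) = W.subtype '' Set.range onb := by
    rw [← Set.range_comp]; rfl
  rw [hr, Submodule.span_image, ← OrthonormalBasis.coe_toBasis onb,
    onb.toBasis.span_eq, Submodule.map_top, Submodule.range_subtype]

lemma ONL_append {m m' : ℕ} {f : Fin m → X} {g : Fin m' → X}
    (hf : Orthonormal ℝ f) (hg : Orthonormal ℝ g)
    (horth : ∀ i j, ⟪f i, g j⟫ = 0) : ONL (List.ofFn f ++ List.ofFn g) := by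
  refine ⟨List.pairwise_append.mpr ⟨(ONL_ofFn f hf).1, (ONL_ofFn g hg).1, ?_⟩, ?_⟩
  · intro a ha b hb
    obtain ⟨i, rfl⟩ := List.mem_ofFn.mp ha
    obtain ⟨j, rfl⟩ := List.mem_ofFn.mp hb
    exact horth i j
  · intro a ha
    rcases List.mem_append.mp ha with h' | h'
    · exact (ONL_ofFn f hf).2 a h'
    · exact (ONL_ofFn g hg).2 a h'

open Submodule Module in
include C in
lemma LC_dual {k n : ℕ} (e : OrthonormalBasis (Fin n) ℝ X) (u : Fin k → X)
    (h : LinearIndependent ℝ u) :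
    ∃ (m : ℕ) (g : Fin m → X) (c : ℝ), c ≠ 0 ∧ Orthonormal ℝ g ∧
      Submodule.span ℝ (Set.range g) = (Submodule.span ℝ (Set.range u))ᗮ ∧
      C.LC (eProd (List.ofFn u)) (eProd (List.ofFn fun i => e i))
        = c • eProd (List.ofFn g) := by
  obtain ⟨f, c₁, hc₁, hfON, hfspan, hueq⟩ := blade_onb u h
  set U := Submodule.span ℝ (Set.range u) with hU
  obtain ⟨g, hgON, hgspan⟩ := sub_onb (X := X) Uᗮ
  have hcross : ∀ i j, ⟪f i, g j⟫ = 0 := by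
    intro i j
    have hfi : f i ∈ U := hfspan ▸ subset_span (Set.mem_range_self i)
    have hgj : g j ∈ (Uᗮ : Submodule ℝ X) := hgspan ▸ subset_span (Set.mem_range_self j)
    exact (Submodule.mem_orthogonal U (g j)).mp hgj (f i) hfi
  have hONL : ONL (List.ofFn f ++ List.ofFn g) := ONL_append hfON hgON hcross
  have hhodge := LC_hodge C (List.ofFn f) (List.ofFn g) hONL
  have hnk : n = k + Module.finrank ℝ (Uᗮ : Submodule ℝ X) := by
    have h1 : Module.finrank ℝ U = k := by rw [hU, finrank_span_eq_card h, Fintype.card_fin]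
    have h2 := Submodule.finrank_add_finrank_orthogonal (K := U)
    have h3 : Module.finrank ℝ X = n := by
      rw [finrank_eq_card_basis e.toBasis, Fintype.card_fin]
    omega
  set z : Fin (k + Module.finrank ℝ (Uᗮ : Submodule ℝ X)) → X := Fin.append f g with hzdef
  have hz : List.ofFn f ++ List.ofFn g = List.ofFn z := (List.ofFn_fin_append f g).symm
  set z' : Fin n → X := fun i => z (Fin.cast hnk i) with hz'def
  have hz' : List.ofFn z' = List.ofFn z := ofFn_cast hnk z
  have hrel := alt_det (ExteriorAlgebra.ιMulti ℝ n) e.toBasis z'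
  set d := e.toBasis.det z' with hd_def
  have hrel' : eProd (List.ofFn z') = d • eProd (List.ofFn fun i => e i) := by
    rw [expBlade_alt, expBlade_alt]
    simpa using hrel
  have hne : eProd (List.ofFn z') ≠ 0 := by
    rw [hz', ← hz]; exact ONL_ne_zero C _ hONL
  have hd : d ≠ 0 := fun h0 => hne (by rw [hrel', h0, zero_smul])
  have hΩ : eProd (List.ofFn fun i => e i) = d⁻¹ • eProd (List.ofFn z') := by
    rw [hrel', smul_smul, inv_mul_cancel₀ hd, one_smul]
  refine ⟨_, g, c₁ * d⁻¹, mul_ne_zero hc₁ (inv_ne_zero hd), hgON, hgspan, ?_⟩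
  rw [hueq, hΩ, hz', ← hz]
  simp only [map_smul, LinearMap.smul_apply, hhodge, smul_smul, mul_comm]

open Submodule Module in
include C in
lemma RC_dual {k n : ℕ} (e : OrthonormalBasis (Fin n) ℝ X) (u : Fin k → X)
    (h : LinearIndependent ℝ u) :
    ∃ (m : ℕ) (g : Fin m → X) (c : ℝ), c ≠ 0 ∧ Orthonormal ℝ g ∧
      Submodule.span ℝ (Set.range g) = (Submodule.span ℝ (Set.range u))ᗮ ∧
      C.RC (eProd (List.ofFn fun i => e i)) (eProd (List.ofFn u))
        = c • eProd (List.ofFn g) := by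
  obtain ⟨f, c₁, hc₁, hfON, hfspan, hueq⟩ := blade_onb u h
  set U := Submodule.span ℝ (Set.range u) with hU
  obtain ⟨g, hgON, hgspan⟩ := sub_onb (X := X) Uᗮ
  have hcross : ∀ i j, ⟪g i, f j⟫ = 0 := by
    intro i j
    have hfj : f j ∈ U := hfspan ▸ subset_span (Set.mem_range_self j)
    have hgi : g i ∈ (Uᗮ : Submodule ℝ X) := hgspan ▸ subset_span (Set.mem_range_self i)
    rw [real_inner_comm]
    exact (Submodule.mem_orthogonal U (g i)).mp hgi (f j) hfj
  have hONL : ONL (List.ofFn g ++ List.ofFn f) := ONL_append hgON hfON hcross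
  have hhodge := RC_hodge C (List.ofFn f) (List.ofFn g) hONL
  have hnk : n = Module.finrank ℝ (Uᗮ : Submodule ℝ X) + k := by
    have h1 : Module.finrank ℝ U = k := by rw [hU, finrank_span_eq_card h, Fintype.card_fin]
    have h2 := Submodule.finrank_add_finrank_orthogonal (K := U)
    have h3 : Module.finrank ℝ X = n := by
      rw [finrank_eq_card_basis e.toBasis, Fintype.card_fin]
    omega
  set z : Fin (Module.finrank ℝ (Uᗮ : Submodule ℝ X) + k) → X := Fin.append g f with hzdef
  have hz : List.ofFn g ++ List.ofFn f = List.ofFn z := (List.ofFn_fin_append g f).symm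
  set z' : Fin n → X := fun i => z (Fin.cast hnk i) with hz'def
  have hz' : List.ofFn z' = List.ofFn z := ofFn_cast hnk z
  have hrel := alt_det (ExteriorAlgebra.ιMulti ℝ n) e.toBasis z'
  set d := e.toBasis.det z' with hd_def
  have hrel' : eProd (List.ofFn z') = d • eProd (List.ofFn fun i => e i) := by
    rw [expBlade_alt, expBlade_alt]
    simpa using hrel
  have hne : eProd (List.ofFn z') ≠ 0 := by
    rw [hz', ← hz]; exact ONL_ne_zero C _ hONL
  have hd : d ≠ 0 := fun h0 => hne (by rw [hrel', h0, zero_smul])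
  have hΩ : eProd (List.ofFn fun i => e i) = d⁻¹ • eProd (List.ofFn z') := by
    rw [hrel', smul_smul, inv_mul_cancel₀ hd, one_smul]
  refine ⟨_, g, d⁻¹ * c₁, mul_ne_zero (inv_ne_zero hd) hc₁, hgON, hgspan, ?_⟩
  rw [hueq, hΩ, hz', ← hz]
  simp only [map_smul, LinearMap.smul_apply, hhodge, smul_smul]
  rw [mul_comm]

omit [FiniteDimensional ℝ X] in
lemma fin_append_eq {m m' : ℕ} (f : Fin m → X) (g : Fin m' → X) :
    Fin.append f g = Sum.elim f g ∘ ⇑finSumFinEquiv.symm := by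
  funext j
  rcases finSumFinEquiv.surjective j with ⟨s, rfl⟩
  cases s with
  | inl i => simp [Fin.append_left]
  | inr i => simp [Fin.append_right]

omit [FiniteDimensional ℝ X] in
lemma range_fin_append {m m' : ℕ} (f : Fin m → X) (g : Fin m' → X) :
    Set.range (Fin.append f g) = Set.range f ∪ Set.range g := by
  rw [fin_append_eq, Set.range_comp, Equiv.range_eq_univ, Set.image_univ,
    Set.Sum.elim_range]

omit [FiniteDimensional ℝ X] in
lemma li_fin_append {m m' : ℕ} {f : Fin m → X} {g : Fin m' → X}
    (hf : LinearIndependent ℝ f) (hg : LinearIndependent ℝ g)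
    (hd : Disjoint (Submodule.span ℝ (Set.range f)) (Submodule.span ℝ (Set.range g))) :
    LinearIndependent ℝ (Fin.append f g) := by
  rw [fin_append_eq]
  exact (hf.sum_type hg hd).comp _ finSumFinEquiv.symm.injective

omit [FiniteDimensional ℝ X] in
lemma eProd_ofFn_cons (x : X) {m : ℕ} (g : Fin m → X) :
    eProd (List.ofFn (Fin.cons x g : Fin (m + 1) → X)) = ιX x * eProd (List.ofFn g) := by
  rw [List.ofFn_succ]
  simp

end Stmt10Aux

lemma expBlade_eProd {X : Type*} [NormedAddCommGroup X] [InnerProductSpace ℝ X] {k : ℕ}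
    (u : Fin k → X) : expBlade u = Stmt10Aux.eProd (List.ofFn u) :=
  Stmt10Aux.expBlade_eq u

open Submodule Module in
/-- the regressive product `M∨N = ⋆_L(⋆_R M ∧ ⋆_R N)` of nonzero blades is
nonzero iff their spaces sum to `X`, in which case it is a blade whose space is the
intersection of their spaces. -/
theorem stmt10 {X : Type*} [NormedAddCommGroup X] [InnerProductSpace ℝ X] [FiniteDimensional ℝ X]
    {n : ℕ} (e : OrthonormalBasis (Fin n) ℝ X)
    -- the grade involution: the unique algebra automorphism with `v̂ = -v` on vectors
    (ginv : ExteriorAlgebra ℝ X →ₐ[ℝ] ExteriorAlgebra ℝ X)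
    (hginv : ∀ v : X, ginv (ExteriorAlgebra.ι ℝ v) = - ExteriorAlgebra.ι ℝ v)
    -- the left contraction by a vector, characterized by its defining properties
    (lc : X → ExteriorAlgebra ℝ X →ₗ[ℝ] ExteriorAlgebra ℝ X)
    (hlc_one : ∀ v : X, lc v 1 = 0)
    (hlc_vec : ∀ v w : X, lc v (ExteriorAlgebra.ι ℝ w) = algebraMap ℝ (ExteriorAlgebra ℝ X) ⟪v, w⟫)
    (hlc_mul : ∀ (v : X) (M N : ExteriorAlgebra ℝ X),
      lc v (M * N) = lc v M * N + ginv M * lc v N)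
    -- the right contraction by a vector `N ↦ N⌞v`, characterized by its defining properties
    (rc : X → ExteriorAlgebra ℝ X →ₗ[ℝ] ExteriorAlgebra ℝ X)
    (hrc_one : ∀ v : X, rc v 1 = 0)
    (hrc_vec : ∀ v w : X, rc v (ExteriorAlgebra.ι ℝ w) = algebraMap ℝ (ExteriorAlgebra ℝ X) ⟪v, w⟫)
    (hrc_mul : ∀ (v : X) (M N : ExteriorAlgebra ℝ X),
      rc v (M * N) = M * rc v N + rc v M * ginv N)
    -- the left contraction `LC M N = M ⌟ N`, extended (bi)linearly in the contractor `M`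
    (LC : ExteriorAlgebra ℝ X →ₗ[ℝ] ExteriorAlgebra ℝ X →ₗ[ℝ] ExteriorAlgebra ℝ X)
    (hLC_one : ∀ N : ExteriorAlgebra ℝ X, LC 1 N = N)
    (hLC_vec : ∀ (v : X) (N : ExteriorAlgebra ℝ X), LC (ExteriorAlgebra.ι ℝ v) N = lc v N)
    (hLC_mul : ∀ (v : X) (M N : ExteriorAlgebra ℝ X),
      LC (ExteriorAlgebra.ι ℝ v * M) N = LC M (lc v N))
    -- the right contraction `RC N M = N ⌞ M` (contractee `N`, contractor `M`),
    -- extended (bi)linearly in the contractor `M`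
    (RC : ExteriorAlgebra ℝ X →ₗ[ℝ] ExteriorAlgebra ℝ X →ₗ[ℝ] ExteriorAlgebra ℝ X)
    (hRC_one : ∀ N : ExteriorAlgebra ℝ X, RC N 1 = N)
    (hRC_vec : ∀ (v : X) (N : ExteriorAlgebra ℝ X), RC N (ExteriorAlgebra.ι ℝ v) = rc v N)
    (hRC_mul : ∀ (v : X) (M N : ExteriorAlgebra ℝ X),
      RC N (ExteriorAlgebra.ι ℝ v * M) = rc v (RC N M))
    {p q : ℕ} (v : Fin p → X) (w : Fin q → X)
    (hA : expBlade v ≠ 0) (hB : expBlade w ≠ 0)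
    -- `reg = A ∨ B`, with Ω = e₁ ∧ ⋯ ∧ e_n, ⋆_R M = LC M Ω, ⋆_L M = RC Ω M
    (reg : ExteriorAlgebra ℝ X)
    (hreg : reg = RC (expBlade fun i => e i)
      (LC (expBlade v) (expBlade fun i => e i) *
        LC (expBlade w) (expBlade fun i => e i))) :
    (reg ≠ 0 ↔ Submodule.span ℝ (Set.range v) ⊔ Submodule.span ℝ (Set.range w) = ⊤) ∧
    (reg ≠ 0 → IsBlade reg ∧
      {x : X | ExteriorAlgebra.ι ℝ x * reg = 0} =
        ((Submodule.span ℝ (Set.range v) ⊓ Submodule.span ℝ (Set.range w) :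
          Submodule ℝ X) : Set X)) := by
  classical
  let C : Stmt10Aux.Ctx X :=
    ⟨ginv, hginv, lc, hlc_one, hlc_vec, hlc_mul, rc, hrc_one, hrc_vec, hrc_mul,
     LC, hLC_one, hLC_vec, hLC_mul, RC, hRC_one, hRC_vec, hRC_mul⟩
  set V := Submodule.span ℝ (Set.range v) with hV
  set W := Submodule.span ℝ (Set.range w) with hW
  have hliv : LinearIndependent ℝ v := (Stmt10Aux.blade_ne_iff C v).mp (by
    rwa [← expBlade_eProd])
  have hliw : LinearIndependent ℝ w := (Stmt10Aux.blade_ne_iff C w).mp (by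
    rwa [← expBlade_eProd])
  obtain ⟨m₁, g₁, c₁, hc₁, hON₁, hsp₁, hLC₁⟩ := Stmt10Aux.LC_dual C e v hliv
  obtain ⟨m₂, g₂, c₂, hc₂, hON₂, hsp₂, hLC₂⟩ := Stmt10Aux.LC_dual C e w hliw
  set z : Fin (m₁ + m₂) → X := Fin.append g₁ g₂ with hzdef
  have hofz : List.ofFn g₁ ++ List.ofFn g₂ = List.ofFn z := (List.ofFn_fin_append _ _).symm
  have hspanz : Submodule.span ℝ (Set.range z) = Vᗮ ⊔ Wᗮ := by
    rw [hzdef, Stmt10Aux.range_fin_append, Submodule.span_union, hsp₁, hsp₂, hV, hW]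
  have hregeq : reg = (c₁ * c₂) • C.RC (Stmt10Aux.eProd (List.ofFn fun i => e i))
      (Stmt10Aux.eProd (List.ofFn z)) := by
    rw [hreg, expBlade_eProd, expBlade_eProd, expBlade_eProd]
    show C.RC _ (C.LC _ _ * C.LC _ _) = _
    rw [hLC₁, hLC₂, smul_mul_assoc, mul_smul_comm, ← Stmt10Aux.eProd_append, hofz,
      map_smul, map_smul, smul_smul]
  -- the degenerate case
  have key2 : V ⊔ W ≠ ⊤ → reg = 0 := by
    intro h
    have hinf : Vᗮ ⊓ Wᗮ ≠ ⊥ := by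
      rw [Submodule.inf_orthogonal]
      exact fun h0 => h (Submodule.orthogonal_eq_bot_iff.mp h0)
    have hdepz : ¬ LinearIndependent ℝ z := by
      intro hli
      have h1 : Module.finrank ℝ (Submodule.span ℝ (Set.range z)) = m₁ + m₂ := by
        rw [finrank_span_eq_card hli, Fintype.card_fin]
      have h2 := Submodule.finrank_sup_add_finrank_inf_eq Vᗮ Wᗮ
      have h3 : Module.finrank ℝ Vᗮ = m₁ := by
        rw [← hsp₁, finrank_span_eq_card hON₁.linearIndependent, Fintype.card_fin]
      have h4 : Module.finrank ℝ Wᗮ = m₂ := by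
        rw [← hsp₂, finrank_span_eq_card hON₂.linearIndependent, Fintype.card_fin]
      have h5 : Module.finrank ℝ (Vᗮ ⊓ Wᗮ : Submodule ℝ X) ≠ 0 := by
        rw [Ne, Submodule.finrank_eq_zero]
        exact hinf
      rw [hspanz] at h1
      omega
    rw [hregeq, Stmt10Aux.blade_dep z hdepz]
    simp
  -- the main case
  have key : V ⊔ W = ⊤ → ∃ (m₃ : ℕ) (g₃ : Fin m₃ → X) (c : ℝ), c ≠ 0 ∧
      Orthonormal ℝ g₃ ∧ Submodule.span ℝ (Set.range g₃) = V ⊓ W ∧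
      reg = c • Stmt10Aux.eProd (List.ofFn g₃) := by
    intro htop
    have hdisj : Disjoint Vᗮ Wᗮ := by
      rw [disjoint_iff, Submodule.inf_orthogonal, htop, Submodule.top_orthogonal_eq_bot]
    have hliz : LinearIndependent ℝ z :=
      Stmt10Aux.li_fin_append hON₁.linearIndependent hON₂.linearIndependent
        (by rwa [hsp₁, hsp₂])
    obtain ⟨m₃, g₃, c₃, hc₃, hON₃, hsp₃, hRC₃⟩ := Stmt10Aux.RC_dual C e z hliz
    refine ⟨m₃, g₃, c₁ * c₂ * c₃, mul_ne_zero (mul_ne_zero hc₁ hc₂) hc₃, hON₃, ?_, ?_⟩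
    · rw [hsp₃, hspanz, ← Submodule.inf_orthogonal,
        Submodule.orthogonal_orthogonal, Submodule.orthogonal_orthogonal]
    · rw [hregeq, hRC₃, smul_smul]
  refine ⟨⟨fun hne => by_contra fun h => hne (key2 h), fun htop => ?_⟩, fun hne => ?_⟩
  · obtain ⟨m₃, g₃, c, hc, hON₃, hsp₃, hr⟩ := key htop
    rw [hr]
    exact smul_ne_zero hc (Stmt10Aux.ONL_ne_zero C _ (Stmt10Aux.ONL_ofFn g₃ hON₃))
  · have htop : V ⊔ W = ⊤ := by_contra fun h => hne (key2 h)
    obtain ⟨m₃, g₃, c, hc, hON₃, hsp₃, hr⟩ := key htop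
    constructor
    · -- IsBlade
      rcases m₃ with _ | m
      · left
        refine ⟨c, ?_⟩
        rw [hr, List.ofFn_zero, Stmt10Aux.eProd_nil, Algebra.algebraMap_eq_smul_one]
      · right
        refine ⟨m + 1, Fin.cons (c • g₃ 0) (fun i => g₃ i.succ), ?_⟩
        rw [show (List.ofFn fun i => ExteriorAlgebra.ι ℝ
            ((Fin.cons (c • g₃ 0) (fun i => g₃ i.succ) : Fin (m+1) → X) i)).prod
          = Stmt10Aux.eProd (List.ofFn (Fin.cons (c • g₃ 0) (fun i => g₃ i.succ) :
            Fin (m+1) → X)) from Stmt10Aux.expBlade_eq _]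
        rw [Stmt10Aux.eProd_ofFn_cons, map_smul, smul_mul_assoc, hr]
        congr 1
        rw [show List.ofFn g₃ = List.ofFn (Fin.cons (g₃ 0) (fun i => g₃ i.succ) :
            Fin (m+1) → X) from congrArg List.ofFn (Fin.cons_self_tail g₃).symm]
        rw [Stmt10Aux.eProd_ofFn_cons]
    · -- annihilator
      ext x
      simp only [Set.mem_setOf_eq, SetLike.mem_coe]
      have hx : ExteriorAlgebra.ι ℝ x * reg
          = c • Stmt10Aux.eProd (List.ofFn (Fin.cons x g₃ : Fin (m₃+1) → X)) := by
        rw [hr, Stmt10Aux.eProd_ofFn_cons, mul_smul_comm]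
      rw [hx, smul_eq_zero, or_iff_right hc]
      constructor
      · intro h0
        have hdep : ¬ LinearIndependent ℝ (Fin.cons x g₃ : Fin (m₃+1) → X) := by
          intro hli
          exact (Stmt10Aux.blade_ne_iff C _).mpr hli h0
        rw [linearIndependent_fin_cons] at hdep
        push_neg at hdep
        rw [← hsp₃]
        exact hdep hON₃.linearIndependent
      · intro hmem
        apply Stmt10Aux.blade_dep
        rw [linearIndependent_fin_cons]
        rintro ⟨-, hnot⟩
        exact hnot (hsp₃ ▸ hmem)
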